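/- Let C ∈ M_{n-1}, V = k·p_n in degree n, and γ, θ graded 2-cocycles of p(C) with values in V. The central extensions p(C)_θ and p(C)_γ (with products extending p(C) by p_i p_j = θ(p_i,p_j), resp. γ(p_i,p_j), when i+j=n) are isomorphic as graded algebras if and only if there exist a graded algebra automorphism σ of p(C) and a nonzero scalar b such that θ∘(σ×σ) = b·γ. -/
import Mathlib


/-- Bilinear multiplication determined by the coefficient matrix `c`:
`p_i p_j = c i j • p_{i+j}`. -/
def dmul {K : Type*} [Field K] (c : ℕ → ℕ → K) (x y : ℕ → K) : ℕ → K :=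
  fun m => ∑ i ∈ Finset.range (m + 1), c i (m - i) * x i * y (m - i)

/-- The bilinear form (coefficient of `p_n`) associated with a 2-cocycle tuple `t`. -/
def Bform {K : Type*} [Field K] (n : ℕ) (t : ℕ → K) (x y : ℕ → K) : K :=
  ∑ i ∈ Finset.Ico 1 n, t i * x i * y (n - i)

/-- The `n × n` coefficient matrix of the central extension `p(C)_θ`: it extends `C`
by the entries `θ_i` at the positions `(i, n-i)`. -/
def Dmat {K : Type*} [Field K] (n : ℕ) (c : ℕ → ℕ → K) (t : ℕ → K) : ℕ → ℕ → K :=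
  fun i j => if i + j = n ∧ 1 ≤ i ∧ 1 ≤ j then t i else c i j

section Aux
variable {K : Type*} [Field K]

lemma smul_single (a b : K) (k : ℕ) : a • (Pi.single k b : ℕ → K) = Pi.single k (a * b) := by
  funext m
  rcases eq_or_ne m k with rfl | h
  · simp
  · simp [Pi.single_eq_of_ne h]

lemma dmul_single (D : ℕ → ℕ → K) (i j : ℕ) (u v : K) :
    dmul D (Pi.single i u) (Pi.single j v) = Pi.single (i + j) (D i j * u * v) := by
  funext m
  simp only [dmul, Pi.single_apply]
  have h : ∀ a ∈ Finset.range (m + 1),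
      D a (m - a) * (if a = i then u else 0) * (if m - a = j then v else 0)
      = if a = i then (if m - a = j then D a (m - a) * u * v else 0) else 0 := by
    intro a _; split_ifs <;> ring
  rw [Finset.sum_congr rfl h, Finset.sum_ite_eq']
  by_cases hm : m = i + j
  · subst hm
    rw [if_pos (Finset.mem_range.mpr (by omega)), if_pos (by omega), if_pos rfl,
      Nat.add_sub_cancel_left]
  · rw [if_neg hm]
    by_cases hi : i ∈ Finset.range (m + 1)
    · rw [if_pos hi, if_neg]
      have := Finset.mem_range.mp hi; omega
    · rw [if_neg hi]

lemma Bform_single (n : ℕ) (t : ℕ → K) (i : ℕ) (hi : 1 ≤ i) (hin : i < n) (u v : K) :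
    Bform n t (Pi.single i u) (Pi.single (n - i) v) = t i * u * v := by
  simp only [Bform, Pi.single_apply]
  have h : ∀ a ∈ Finset.Ico 1 n,
      t a * (if a = i then u else 0) * (if n - a = n - i then v else 0)
      = if a = i then t a * u * v else 0 := by
    intro a _; split_ifs with h1 h2
    · ring
    · subst h1; omega
    · ring
    · ring
  rw [Finset.sum_congr rfl h, Finset.sum_ite_eq', if_pos (Finset.mem_Ico.mpr ⟨hi, hin⟩)]

/-- diagonal linear equivalence -/
def diagE (f : ℕ → K) (hf : ∀ i, f i ≠ 0) : (ℕ → K) ≃ₗ[K] (ℕ → K) :=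
  LinearEquiv.piCongrRight (fun i => LinearEquiv.smulOfNeZero K K (f i) (hf i))

lemma diagE_apply (f : ℕ → K) (hf : ∀ i, f i ≠ 0) (x : ℕ → K) (m : ℕ) :
    diagE f hf x m = f m * x m := rfl

lemma diagE_single (f : ℕ → K) (hf : ∀ i, f i ≠ 0) (k : ℕ) (u : K) :
    diagE f hf (Pi.single k u) = Pi.single k (f k * u) := by
  funext m
  rcases eq_or_ne m k with rfl | h
  · simp [diagE_apply]
  · simp [diagE_apply, Pi.single_eq_of_ne h]

lemma extract (A B : ℕ → ℕ → K) (ψ : (ℕ → K) ≃ₗ[K] (ℕ → K)) (g : ℕ → K)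
    (hg : ∀ i, ψ (Pi.single i 1) = Pi.single i (g i))
    (hm : ∀ x y, ψ (dmul A x y) = dmul B (ψ x) (ψ y)) (i j : ℕ) :
    A i j * g (i + j) = B i j * (g i * g j) := by
  have h1 := hm (Pi.single i 1) (Pi.single j 1)
  rw [dmul_single, hg i, hg j, dmul_single] at h1
  have h2 : Pi.single (i + j) (A i j * 1 * 1) = (A i j) • (Pi.single (i + j) (1 : K) : ℕ → K) := by
    rw [smul_single]; ring_nf
  rw [h2, map_smul, hg, smul_single] at h1
  have h3 := congrFun h1 (i + j)
  simp only [Pi.single_eq_same] at h3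
  linear_combination h3

lemma diag_dmul (A B : ℕ → ℕ → K) (f : ℕ → K)
    (h : ∀ a b, f (a + b) * A a b = f a * f b * B a b) (x y : ℕ → K) (m : ℕ) :
    f m * dmul A x y m = dmul B (fun i => f i * x i) (fun i => f i * y i) m := by
  simp only [dmul]
  rw [Finset.mul_sum]
  refine Finset.sum_congr rfl fun a ha => ?_
  have ham : a + (m - a) = m := by
    have := Finset.mem_range.mp ha; omega
  have hk := h a (m - a)
  rw [ham] at hk
  calc f m * (A a (m - a) * x a * y (m - a))
      = (f m * A a (m - a)) * x a * y (m - a) := by ring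
    _ = (f a * f (m - a) * B a (m - a)) * x a * y (m - a) := by rw [hk]
    _ = B a (m - a) * (f a * x a) * (f (m - a) * y (m - a)) := by ring

end Aux

theorem stmt_7 {K : Type*} [Field K] (n : ℕ) (hn : 2 ≤ n) (c : ℕ → ℕ → K)
    (hsym : ∀ i j, c i j = c j i)
    (hassoc : ∀ i j l, 1 ≤ i → 1 ≤ j → 1 ≤ l →
      c j l * c i (j + l) = c i j * c (i + j) l)
    (hzero : ∀ i j, i = 0 ∨ j = 0 ∨ n - 1 < i + j → c i j = 0)
    (tθ tγ : ℕ → K)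
    (hθsym : ∀ i, 1 ≤ i → i ≤ n - 1 → tθ i = tθ (n - i))
    (hθinv : ∀ i j l, 1 ≤ i → 1 ≤ j → 1 ≤ l → i + j + l = n →
      tθ (i + j) * c i j = tθ (j + l) * c j l)
    (hγsym : ∀ i, 1 ≤ i → i ≤ n - 1 → tγ i = tγ (n - i))
    (hγinv : ∀ i j l, 1 ≤ i → 1 ≤ j → 1 ≤ l → i + j + l = n →
      tγ (i + j) * c i j = tγ (j + l) * c j l) :
    -- the central extensions `p(C)_θ` and `p(C)_γ` are isomorphic as graded algebras
    (∃ φ : (ℕ → K) ≃ₗ[K] (ℕ → K),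
        (∀ i : ℕ, ∃ d : K, φ (Pi.single i 1) = Pi.single i d) ∧
        ∀ x y, φ (dmul (Dmat n c tθ) x y) = dmul (Dmat n c tγ) (φ x) (φ y)) ↔
    -- iff some graded algebra automorphism σ of `p(C)` and b ≠ 0 give θ∘(σ×σ) = b·γ
    (∃ σ : (ℕ → K) ≃ₗ[K] (ℕ → K),
        (∀ i : ℕ, ∃ d : K, σ (Pi.single i 1) = Pi.single i d) ∧
        (∀ x y, σ (dmul c x y) = dmul c (σ x) (σ y)) ∧
        ∃ b : K, b ≠ 0 ∧ ∀ x y, Bform n tθ (σ x) (σ y) = b * Bform n tγ x y) := by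
  constructor
  · rintro ⟨φ, hdiag, hmul⟩
    choose d hd using hdiag
    have hd0 : ∀ i, d i ≠ 0 := by
      intro i hdi
      have h1 : φ (Pi.single i 1) = 0 := by rw [hd i, hdi]; simp
      have h2 : (Pi.single i 1 : ℕ → K) = 0 := by
        have := φ.injective (h1.trans (map_zero φ).symm)
        exact this
      have := congrFun h2 i
      simp at this
    have key : ∀ i j, Dmat n c tθ i j * d (i + j) = Dmat n c tγ i j * (d i * d j) :=
      extract _ _ φ d hd hmul
    have hkey_c : ∀ i j, c i j ≠ 0 → d (i + j) = d i * d j := by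
      intro i j hc
      have hi1 : 1 ≤ i := by by_contra h; exact hc (hzero i j (Or.inl (by omega)))
      have hj1 : 1 ≤ j := by by_contra h; exact hc (hzero i j (Or.inr (Or.inl (by omega))))
      have hij : i + j ≤ n - 1 := by
        by_contra h; exact hc (hzero i j (Or.inr (Or.inr (by omega))))
      have hDθ : Dmat n c tθ i j = c i j := by
        unfold Dmat; rw [if_neg]; rintro ⟨h1, -, -⟩; omega
      have hDγ : Dmat n c tγ i j = c i j := by
        unfold Dmat; rw [if_neg]; rintro ⟨h1, -, -⟩; omega
      have hk := key i j
      rw [hDθ, hDγ] at hk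
      exact mul_left_cancel₀ hc hk
    have hkey_n : ∀ i, 1 ≤ i → i < n → tθ i * d n = tγ i * (d i * d (n - i)) := by
      intro i hi hin
      have hk := key i (n - i)
      have hsum : i + (n - i) = n := by omega
      rw [hsum] at hk
      have hDθ : Dmat n c tθ i (n - i) = tθ i := by
        unfold Dmat; rw [if_pos ⟨hsum, hi, by omega⟩]
      have hDγ : Dmat n c tγ i (n - i) = tγ i := by
        unfold Dmat; rw [if_pos ⟨hsum, hi, by omega⟩]
      rw [hDθ, hDγ] at hk
      exact hk
    set f : ℕ → K := fun i => (d i)⁻¹ with hf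
    have hf0 : ∀ i, f i ≠ 0 := fun i => inv_ne_zero (hd0 i)
    refine ⟨diagE f hf0, fun i => ⟨f i, by rw [diagE_single, mul_one]⟩, ?_, (d n)⁻¹,
      inv_ne_zero (hd0 n), ?_⟩
    · intro x y
      funext m
      have hkey' : ∀ a b, f (a + b) * c a b = f a * f b * c a b := by
        intro a b
        by_cases hc : c a b = 0
        · rw [hc, mul_zero, mul_zero]
        · rw [hf]
          simp only
          rw [hkey_c a b hc, mul_inv]
      have := diag_dmul c c f hkey' x y m
      simpa [diagE_apply, dmul] using this
    · intro x y
      simp only [Bform, diagE_apply]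
      rw [Finset.mul_sum]
      refine Finset.sum_congr rfl fun a ha => ?_
      obtain ⟨ha1, ha2⟩ := Finset.mem_Ico.mp ha
      have hk := hkey_n a ha1 ha2
      have h1 := hd0 a; have h2 := hd0 (n - a); have h3 := hd0 n
      rw [hf]; simp only
      field_simp
      linear_combination (x a * y (n - a)) * hk
  · rintro ⟨σ, hdiag, hσmul, b, hb, hB⟩
    choose e he using hdiag
    have he0 : ∀ i, e i ≠ 0 := by
      intro i hei
      have h1 : σ (Pi.single i 1) = 0 := by rw [he i, hei]; simp
      have h2 : (Pi.single i 1 : ℕ → K) = 0 := σ.injective (h1.trans (map_zero σ).symm)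
      have := congrFun h2 i
      simp at this
    have hce : ∀ i j, c i j ≠ 0 → e (i + j) = e i * e j := by
      intro i j hc
      have hk := extract c c σ e he hσmul i j
      exact mul_left_cancel₀ hc hk
    have htB : ∀ i, 1 ≤ i → i < n → tθ i * (e i * e (n - i)) = b * tγ i := by
      intro i hi hin
      have h1 := hB (Pi.single i 1) (Pi.single (n - i) 1)
      rw [he, he, Bform_single n tθ i hi hin, Bform_single n tγ i hi hin] at h1
      rw [mul_one, mul_one] at h1
      linear_combination h1
    set f : ℕ → K := fun i => if i = n then b⁻¹ else (e i)⁻¹ with hf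
    have hf0 : ∀ i, f i ≠ 0 := by
      intro i; rw [hf]; simp only
      split_ifs
      · exact inv_ne_zero hb
      · exact inv_ne_zero (he0 i)
    refine ⟨diagE f hf0, fun i => ⟨f i, by rw [diagE_single, mul_one]⟩, ?_⟩
    intro x y
    funext m
    have hkey : ∀ a j, f (a + j) * Dmat n c tθ a j = f a * f j * Dmat n c tγ a j := by
      intro a j
      by_cases h0 : a = 0 ∨ j = 0
      · have hc : c a j = 0 := hzero a j (by tauto)
        have hDθ : Dmat n c tθ a j = 0 := by
          unfold Dmat; rw [if_neg, hc]; rintro ⟨-, h1, h2⟩; omega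
        have hDγ : Dmat n c tγ a j = 0 := by
          unfold Dmat; rw [if_neg, hc]; rintro ⟨-, h1, h2⟩; omega
        rw [hDθ, hDγ, mul_zero, mul_zero]
      push_neg at h0
      obtain ⟨ha0, hj0⟩ := h0
      have ha1 : 1 ≤ a := by omega
      have hj1 : 1 ≤ j := by omega
      by_cases hsumn : a + j = n
      · have hDθ : Dmat n c tθ a j = tθ a := by unfold Dmat; rw [if_pos ⟨hsumn, ha1, hj1⟩]
        have hDγ : Dmat n c tγ a j = tγ a := by unfold Dmat; rw [if_pos ⟨hsumn, ha1, hj1⟩]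
        have han : a ≠ n := by omega
        have hjn : j ≠ n := by omega
        have hja : j = n - a := by omega
        have hk := htB a ha1 (by omega)
        rw [← hja] at hk
        rw [hDθ, hDγ, hf]; simp only
        rw [if_pos hsumn, if_neg han, if_neg hjn]
        have h1 := he0 a; have h2 := he0 j
        field_simp
        linear_combination hk
      · have hDθ : Dmat n c tθ a j = c a j := by
          unfold Dmat; rw [if_neg]; rintro ⟨h1, -, -⟩; exact hsumn h1
        have hDγ : Dmat n c tγ a j = c a j := by
          unfold Dmat; rw [if_neg]; rintro ⟨h1, -, -⟩; exact hsumn h1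
        rw [hDθ, hDγ]
        by_cases hc : c a j = 0
        · rw [hc, mul_zero, mul_zero]
        · have hij : a + j ≤ n - 1 := by
            by_contra h; exact hc (hzero a j (Or.inr (Or.inr (by omega))))
          have han : a ≠ n := by omega
          have hjn : j ≠ n := by omega
          have hsn : a + j ≠ n := by omega
          rw [hf]; simp only
          rw [if_neg hsn, if_neg han, if_neg hjn, hce a j hc, mul_inv]
    have := diag_dmul (Dmat n c tθ) (Dmat n c tγ) f hkey x y m
    simpa [diagE_apply, dmul] using this
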